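/- Fix n ≥ 3 and ρ* ∈ (0,1)^n. There exist ε > 0 and M > 0 such that for every ρ ∈ [0,1)^n with max_i |ρ_i − g¹_i| < ε, one has for all i ≠ 1: |F_i(ρ) − ρ*_i ρ*_1| ≤ M·(1 − F_1(ρ)). -/

import Mathlib

open Finset

noncomputable def lam (n : ℕ) (ρ : Fin n → ℝ) (j : Fin n) : ℝ :=
  (ρ j / (1 - ρ j ^ 2)) / (1 + ∑ k, ρ k ^ 2 / (1 - ρ k ^ 2))

noncomputable def emF (n : ℕ) (ρs ρ : Fin n → ℝ) (i : Fin n) : ℝ :=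
  (ρ i + ∑ j ∈ Finset.univ.erase i, (ρs i * ρs j - ρ i * ρ j) * lam n ρ j) /
    Real.sqrt (1 + ∑ j, ∑ k ∈ Finset.univ.erase j,
      (ρs j * ρs k - ρ j * ρ k) * lam n ρ j * lam n ρ k)

noncomputable def gvec (n : ℕ) (h : 0 < n) (ρs : Fin n → ℝ) : Fin n → ℝ :=
  fun i => if i = ⟨0, h⟩ then 1 else ρs ⟨0, h⟩ * ρs i

section aux
variable {n : ℕ} {ρ : Fin n → ℝ}

lemma aux_pos (h : ∀ i, ρ i ∈ Set.Ico (0:ℝ) 1) (k : Fin n) : 0 < 1 - ρ k ^ 2 := by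
  have h1 := (h k).1; have h2 := (h k).2; nlinarith

lemma aux_term_nonneg (h : ∀ i, ρ i ∈ Set.Ico (0:ℝ) 1) (k : Fin n) :
    0 ≤ ρ k ^ 2 / (1 - ρ k ^ 2) :=
  div_nonneg (sq_nonneg _) (aux_pos h k).le

lemma aux_S_pos (h : ∀ i, ρ i ∈ Set.Ico (0:ℝ) 1) :
    0 < 1 + ∑ k, ρ k ^ 2 / (1 - ρ k ^ 2) := by
  have : 0 ≤ ∑ k, ρ k ^ 2 / (1 - ρ k ^ 2) :=
    Finset.sum_nonneg fun k _ => aux_term_nonneg h k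
  linarith

lemma aux_S_ge (h : ∀ i, ρ i ∈ Set.Ico (0:ℝ) 1) (i : Fin n) :
    1 / (1 - ρ i ^ 2) ≤ 1 + ∑ k, ρ k ^ 2 / (1 - ρ k ^ 2) := by
  have hp := aux_pos h i
  have h1 : 1 / (1 - ρ i ^ 2) = 1 + ρ i ^ 2 / (1 - ρ i ^ 2) := by field_simp; ring
  rw [h1]
  have := Finset.single_le_sum (f := fun k => ρ k ^ 2 / (1 - ρ k ^ 2))
    (fun k _ => aux_term_nonneg h k) (Finset.mem_univ i)
  linarith

lemma aux_div_le (h : ∀ i, ρ i ∈ Set.Ico (0:ℝ) 1) {x : ℝ} (hx : 0 ≤ x) (i : Fin n) :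
    x / (1 + ∑ k, ρ k ^ 2 / (1 - ρ k ^ 2)) ≤ x * (1 - ρ i ^ 2) := by
  have hp := aux_pos h i
  have hS := aux_S_ge h i
  have hSpos := aux_S_pos h
  rw [div_le_iff₀ hSpos]
  calc x = x * ((1 - ρ i ^ 2) * (1 / (1 - ρ i ^ 2))) := by field_simp
    _ ≤ x * ((1 - ρ i ^ 2) * (1 + ∑ k, ρ k ^ 2 / (1 - ρ k ^ 2))) := by gcongr
    _ = x * (1 - ρ i ^ 2) * (1 + ∑ k, ρ k ^ 2 / (1 - ρ k ^ 2)) := by ring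

lemma lam_nonneg (h : ∀ i, ρ i ∈ Set.Ico (0:ℝ) 1) (j : Fin n) : 0 ≤ lam n ρ j :=
  div_nonneg (div_nonneg (h j).1 (aux_pos h j).le) (aux_S_pos h).le

lemma lam_le (h : ∀ i, ρ i ∈ Set.Ico (0:ℝ) 1) (i j : Fin n) :
    lam n ρ j ≤ (ρ j / (1 - ρ j ^ 2)) * (1 - ρ i ^ 2) :=
  aux_div_le h (div_nonneg (h j).1 (aux_pos h j).le) i

lemma lam_le_self (h : ∀ i, ρ i ∈ Set.Ico (0:ℝ) 1) (j : Fin n) : lam n ρ j ≤ ρ j := by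
  have hp := aux_pos h j
  calc lam n ρ j ≤ (ρ j / (1 - ρ j ^ 2)) * (1 - ρ j ^ 2) := lam_le h j j
    _ = ρ j := by field_simp

lemma one_sub_lam_le (h : ∀ i, ρ i ∈ Set.Ico (0:ℝ) 1) (i : Fin n) :
    1 - lam n ρ i ≤
      (1 + ∑ k ∈ Finset.univ.erase i, ρ k ^ 2 / (1 - ρ k ^ 2)) * (1 - ρ i ^ 2) := by
  have hp := aux_pos h i
  have hSpos := aux_S_pos h (ρ := ρ)
  have hsplit : (1 : ℝ) + ∑ k, ρ k ^ 2 / (1 - ρ k ^ 2)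
      = 1 + (ρ i ^ 2 / (1 - ρ i ^ 2) + ∑ k ∈ Finset.univ.erase i, ρ k ^ 2 / (1 - ρ k ^ 2)) := by
    rw [← Finset.add_sum_erase _ _ (Finset.mem_univ i)]
  set K := ∑ k ∈ Finset.univ.erase i, ρ k ^ 2 / (1 - ρ k ^ 2) with hK
  have hKnn : 0 ≤ K := Finset.sum_nonneg fun k _ => aux_term_nonneg h k
  set S := 1 + ∑ k, ρ k ^ 2 / (1 - ρ k ^ 2) with hS
  have hform : 1 - lam n ρ i = (S - ρ i / (1 - ρ i ^ 2)) / S := by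
    unfold lam
    rw [← hS]
    field_simp
  rw [hform]
  have hnum_nn : 0 ≤ S - ρ i / (1 - ρ i ^ 2) := by
    have h1 : ρ i / (1 - ρ i ^ 2) ≤ 1 / (1 - ρ i ^ 2) := by
      gcongr
      exact (h i).2.le
    have h2 := aux_S_ge h i
    rw [← hS] at h2
    linarith
  have hnum_le : S - ρ i / (1 - ρ i ^ 2) ≤ 1 + K := by
    rw [hsplit]
    have : ρ i ^ 2 / (1 - ρ i ^ 2) - ρ i / (1 - ρ i ^ 2) ≤ 0 := by
      rw [div_sub_div_same]
      apply div_nonpos_of_nonpos_of_nonneg _ hp.le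
      nlinarith [(h i).1, (h i).2]
    linarith
  calc (S - ρ i / (1 - ρ i ^ 2)) / S ≤ (S - ρ i / (1 - ρ i ^ 2)) * (1 - ρ i ^ 2) := by
        have h5 := aux_div_le h hnum_nn i; rw [← hS] at h5; exact h5
    _ ≤ (1 + K) * (1 - ρ i ^ 2) := by gcongr
end aux

set_option maxHeartbeats 16000000 in
theorem em_errors_dominated_near_boundary (n : ℕ) (hn : 3 ≤ n) (ρs : Fin n → ℝ)
    (hρs : ∀ i, ρs i ∈ Set.Ioo (0 : ℝ) 1) :
    ∃ ε > (0 : ℝ), ∃ M > (0 : ℝ), ∀ ρ : Fin n → ℝ,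
      (∀ i, ρ i ∈ Set.Ico (0 : ℝ) 1) →
      (∀ i, |ρ i - gvec n (by omega) ρs i| < ε) →
      ∀ i : Fin n, i ≠ ⟨0, by omega⟩ →
        |emF n ρs ρ i - ρs i * ρs ⟨0, by omega⟩|
          ≤ M * (1 - emF n ρs ρ ⟨0, by omega⟩) := by
  have hn0 : 0 < n := by omega
  set i0 : Fin n := ⟨0, hn0⟩ with hi0
  have hmk : ∀ (h : 0 < n), (⟨0, h⟩ : Fin n) = i0 := fun _ => rfl
  have hne : (Finset.univ : Finset (Fin n)).Nonempty := ⟨i0, Finset.mem_univ _⟩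
  obtain ⟨m, hm⟩ : ∃ x : ℝ, x = Finset.univ.sup' hne ρs := ⟨_, rfl⟩
  have hm_le : ∀ i, ρs i ≤ m := fun i => by
    rw [hm]; exact Finset.le_sup' ρs (Finset.mem_univ i)
  have hm1 : m < 1 := by
    rw [hm, Finset.sup'_lt_iff]; exact fun i _ => (hρs i).2
  have hm0 : 0 < m := lt_of_lt_of_le (hρs i0).1 (hm_le i0)
  obtain ⟨r, hr⟩ : ∃ x : ℝ, x = (1 + m) / 2 := ⟨_, rfl⟩
  have hr1 : r < 1 := by rw [hr]; linarith
  have hr0 : 0 < r := by rw [hr]; linarith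
  have hrr : 0 < 1 - r ^ 2 := by nlinarith
  have hrr1 : 1 - r ^ 2 ≤ 1 := by nlinarith
  obtain ⟨B, hB⟩ : ∃ x : ℝ, x = 1 / (1 - r ^ 2) := ⟨_, rfl⟩
  have hBpos : 0 < B := by rw [hB]; positivity
  have hB1 : 1 ≤ B := by
    rw [hB, le_div_iff₀ hrr]; linarith
  obtain ⟨CE, hCE⟩ : ∃ x : ℝ, x = 4 * (n : ℝ) ^ 2 * B ^ 2 := ⟨_, rfl⟩
  obtain ⟨Ca, hCa⟩ : ∃ x : ℝ, x = 7 * (1 + (n : ℝ) * B) := ⟨_, rfl⟩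
  have hnR : (0:ℝ) < n := by positivity
  have hCEpos : 0 < CE := by rw [hCE]; positivity
  have hCapos : 0 < Ca := by
    rw [hCa]; have : 0 < (n:ℝ) * B := by positivity
    linarith
  obtain ⟨CL, hCL⟩ : ∃ x : ℝ, x = Ca + CE := ⟨_, rfl⟩
  have hCLpos : 0 < CL := by rw [hCL]; linarith
  obtain ⟨X, hX⟩ : ∃ x : ℝ, x = CE + 4 * (n : ℝ) * B + 1 := ⟨_, rfl⟩
  have hXpos : 0 < X := by
    rw [hX]; have : 0 < 4 * (n:ℝ) * B := by positivity
    linarith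
  obtain ⟨ε, hε⟩ : ∃ x : ℝ, x = min ((1 - m) / 2) (min 1 (1 / (2 * X))) := ⟨_, rfl⟩
  have hεpos : 0 < ε := by
    rw [hε]
    refine lt_min (by linarith) (lt_min one_pos (div_pos one_pos (by linarith)))
  have hε1 : ε ≤ 1 := by rw [hε]; exact le_trans (min_le_right _ _) (min_le_left _ _)
  have hεm : ε ≤ (1 - m) / 2 := by rw [hε]; exact min_le_left _ _
  have hεX : ε * X ≤ 1 / 2 := by
    have h1 : ε ≤ 1 / (2 * X) := by
      rw [hε]; exact le_trans (min_le_right _ _) (min_le_right _ _)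
    rw [le_div_iff₀ (by positivity)] at h1
    nlinarith
  refine ⟨ε, hεpos, 2 * CL, by linarith, ?_⟩
  intro ρ hρ hcl i hii0
  try simp only [hmk] at hii0
  try simp only [hmk]
  simp only [gvec, hmk] at hcl
  have hclose0 : |ρ i0 - 1| < ε := by
    have := hcl i0; rwa [if_pos rfl] at this
  have hclosej : ∀ j, j ≠ i0 → |ρ j - ρs i0 * ρs j| < ε := by
    intro j hj
    have := hcl j; rwa [if_neg hj] at this
  clear hcl hmk hε hm
  obtain ⟨t, ht⟩ : ∃ x : ℝ, x = 1 - ρ i0 := ⟨_, rfl⟩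
  have htpos : 0 < t := by have := (hρ i0).2; rw [ht]; linarith
  have htε : t < ε := by
    have := hclose0
    rw [abs_sub_lt_iff] at this
    rw [ht]; linarith [this.2]
  -- basic bounds
  have hρ01 : ρ i0 ≤ 1 := (hρ i0).2.le
  have h2t : 1 - ρ i0 ^ 2 ≤ 2 * t := by
    have h0 := (hρ i0).1; rw [ht]; linarith [sq_nonneg (1 - ρ i0)]
  have hρjr : ∀ j, j ≠ i0 → ρ j ≤ r := by
    intro j hj
    have h1 := hclosej j hj
    rw [abs_sub_lt_iff] at h1
    have h2 : ρs i0 * ρs j ≤ m := by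
      have h3 := mul_le_mul_of_nonneg_right (hρs i0).2.le (hρs j).1.le
      have h4 := hm_le j
      rw [one_mul] at h3
      linarith
    rw [hr]; linarith [h1.1, hεm]
  have hdivB : ∀ j, j ≠ i0 → ρ j / (1 - ρ j ^ 2) ≤ B := by
    intro j hj
    have hjr := hρjr j hj
    have h0 := (hρ j).1
    have hd : 1 - r ^ 2 ≤ 1 - ρ j ^ 2 := by
      have := mul_le_mul hjr hjr h0 hr0.le
      have e : ρ j * ρ j = ρ j ^ 2 := by ring
      have e2 : r * r = r ^ 2 := by ring
      linarith
    rw [hB]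
    exact div_le_div₀ zero_le_one (hρ j).2.le hrr hd
  have htermB : ∀ j, j ≠ i0 → ρ j ^ 2 / (1 - ρ j ^ 2) ≤ B := by
    intro j hj
    have hjr := hρjr j hj
    have h0 := (hρ j).1
    have hd : 1 - r ^ 2 ≤ 1 - ρ j ^ 2 := by
      have := mul_le_mul hjr hjr h0 hr0.le
      have e : ρ j * ρ j = ρ j ^ 2 := by ring
      have e2 : r * r = r ^ 2 := by ring
      linarith
    rw [hB]
    refine div_le_div₀ zero_le_one ?_ hrr hd
    have := mul_le_mul (hρ j).2.le (hρ j).2.le h0 zero_le_one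
    have e : ρ j * ρ j = ρ j ^ 2 := by ring
    linarith
  have hcard : ∀ s : Finset (Fin n), (s.card : ℝ) ≤ n := by
    intro s
    exact_mod_cast le_trans (Finset.card_le_univ s) (by simp)
  -- lambda bounds
  have hlamnn : ∀ j, 0 ≤ lam n ρ j := lam_nonneg hρ
  have hlamj : ∀ j, j ≠ i0 → lam n ρ j ≤ 2 * B * t := by
    intro j hj
    calc lam n ρ j ≤ (ρ j / (1 - ρ j ^ 2)) * (1 - ρ i0 ^ 2) := lam_le hρ i0 j
      _ ≤ B * (2 * t) := by
          apply mul_le_mul (hdivB j hj) h2t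
          · have := aux_pos hρ i0; linarith
          · exact hBpos.le
      _ = 2 * B * t := by ring
  have hlam0le : lam n ρ i0 ≤ 1 := le_trans (lam_le_self hρ i0) hρ01
  have hK : ∑ k ∈ Finset.univ.erase i0, ρ k ^ 2 / (1 - ρ k ^ 2) ≤ (n : ℝ) * B := by
    calc ∑ k ∈ Finset.univ.erase i0, ρ k ^ 2 / (1 - ρ k ^ 2)
        ≤ ∑ _k ∈ Finset.univ.erase i0, B := by
          apply Finset.sum_le_sum
          intro k hk
          exact htermB k (Finset.mem_erase.mp hk).1
      _ = ((Finset.univ.erase i0).card : ℝ) * B := by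
          rw [Finset.sum_const, nsmul_eq_mul]
      _ ≤ (n : ℝ) * B := by
          apply mul_le_mul_of_nonneg_right (hcard _) hBpos.le
  have h1mlam0 : 1 - lam n ρ i0 ≤ 2 * (1 + (n : ℝ) * B) * t := by
    calc 1 - lam n ρ i0
        ≤ (1 + ∑ k ∈ Finset.univ.erase i0, ρ k ^ 2 / (1 - ρ k ^ 2)) * (1 - ρ i0 ^ 2) :=
          one_sub_lam_le hρ i0
      _ ≤ (1 + (n : ℝ) * B) * (2 * t) := by
          apply mul_le_mul (by linarith) h2t
          · have := aux_pos hρ i0; linarith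
          · positivity
      _ = 2 * (1 + (n : ℝ) * B) * t := by ring
  -- coefficient bounds
  have hfone : ∀ j k : Fin n, |ρs j * ρs k - ρ j * ρ k| ≤ 1 := by
    intro j k
    have h1 := (hρs j).1; have h2 := (hρs j).2
    have h3 := (hρs k).1; have h4 := (hρs k).2
    have h5 := (hρ j).1; have h6 := (hρ j).2
    have h7 := (hρ k).1; have h8 := (hρ k).2
    have hab := mul_le_mul h2.le h4.le h3.le zero_le_one
    have hab0 : 0 ≤ ρs j * ρs k := mul_nonneg h1.le h3.le
    have hcd := mul_le_mul h6.le h8.le h7 zero_le_one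
    have hcd0 : 0 ≤ ρ j * ρ k := mul_nonneg h5 h7
    rw [abs_le]
    constructor <;> linarith
  have hfsmall : ∀ k, k ≠ i0 → |ρs i0 * ρs k - ρ i0 * ρ k| ≤ 2 * ε := by
    intro k hk
    have h1 := (hclosej k hk).le
    have h2 : |ρ k - ρ i0 * ρ k| ≤ ε := by
      rw [abs_of_nonneg (by
        have := mul_nonneg (hρ k).1 (show (0:ℝ) ≤ 1 - ρ i0 by linarith [(hρ i0).2])
        linarith [mul_nonneg (hρ k).1 (show (0:ℝ) ≤ 1 - ρ i0 by linarith [(hρ i0).2])])]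
      have h9 := mul_le_mul_of_nonneg_right (hρ k).2.le
        (show (0:ℝ) ≤ 1 - ρ i0 by linarith [(hρ i0).2])
      have h10 : ρ k * (1 - ρ i0) = ρ k - ρ i0 * ρ k := by ring
      linarith [htε.le]
    calc |ρs i0 * ρs k - ρ i0 * ρ k|
        = |(ρs i0 * ρs k - ρ k) + (ρ k - ρ i0 * ρ k)| := by ring_nf
      _ ≤ |ρs i0 * ρs k - ρ k| + |ρ k - ρ i0 * ρ k| := abs_add_le _ _
      _ ≤ ε + ε := by
          rw [abs_sub_comm]
          exact add_le_add h1 h2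
      _ = 2 * ε := by ring
  have hεnn := hεpos.le
  have htnn := htpos.le
  rw [hX] at hεX
  obtain ⟨E, hE⟩ : ∃ x : ℝ, x = ∑ j, ∑ l ∈ Finset.univ.erase j,
      (ρs j * ρs l - ρ j * ρ l) * lam n ρ j * lam n ρ l := ⟨_, rfl⟩
  obtain ⟨Ai, hAi⟩ : ∃ x : ℝ, x = ρ i + ∑ j ∈ Finset.univ.erase i,
      (ρs i * ρs j - ρ i * ρ j) * lam n ρ j := ⟨_, rfl⟩
  obtain ⟨A0, hA0⟩ : ∃ x : ℝ, x = ρ i0 + ∑ j ∈ Finset.univ.erase i0,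
      (ρs i0 * ρs j - ρ i0 * ρ j) * lam n ρ j := ⟨_, rfl⟩
  obtain ⟨D, hD⟩ : ∃ x : ℝ, x = Real.sqrt (1 + E) := ⟨_, rfl⟩
  have hemFi : emF n ρs ρ i = Ai / D := by rw [emF, hAi, hD, hE]
  have hemF0 : emF n ρs ρ i0 = A0 / D := by rw [emF, hA0, hD, hE]
  -- per-term bound for E
  have hterm : ∀ j k : Fin n, k ≠ j →
      |(ρs j * ρs k - ρ j * ρ k) * lam n ρ j * lam n ρ k| ≤ 4 * B ^ 2 * (ε * t) := by
    intro j k hkj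
    rw [abs_mul, abs_mul]
    rcases eq_or_ne j i0 with rfl | hj
    · have hk : k ≠ i0 := hkj
      have h1 := hfsmall k hk
      have h2 : |lam n ρ i0| ≤ 1 := by rw [abs_of_nonneg (hlamnn i0)]; exact hlam0le
      have h3 : |lam n ρ k| ≤ 2 * B * t := by rw [abs_of_nonneg (hlamnn k)]; exact hlamj k hk
      have hbt : (0:ℝ) ≤ 2 * B * t := mul_nonneg (mul_nonneg (by norm_num) hBpos.le) htnn
      calc |ρs i0 * ρs k - ρ i0 * ρ k| * |lam n ρ i0| * |lam n ρ k|
          ≤ (2 * ε) * 1 * (2 * B * t) :=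
            mul_le_mul (mul_le_mul h1 h2 (abs_nonneg _) (by linarith)) h3 (abs_nonneg _)
              (mul_nonneg (by linarith) zero_le_one)
        _ ≤ 4 * B ^ 2 * (ε * t) := by
            have key : 0 ≤ 4 * B * (B - 1) * (ε * t) :=
              mul_nonneg (mul_nonneg (by linarith) (by linarith)) (mul_nonneg hεnn htnn)
            linarith [key]
    · rcases eq_or_ne k i0 with rfl | hk
      · have h1 : |ρs j * ρs i0 - ρ j * ρ i0| ≤ 2 * ε := by
          rw [show ρs j * ρs i0 - ρ j * ρ i0 = ρs i0 * ρs j - ρ i0 * ρ j by ring]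
          exact hfsmall j hj
        have h2 : |lam n ρ j| ≤ 2 * B * t := by rw [abs_of_nonneg (hlamnn j)]; exact hlamj j hj
        have h3 : |lam n ρ i0| ≤ 1 := by rw [abs_of_nonneg (hlamnn i0)]; exact hlam0le
        have hbt : (0:ℝ) ≤ 2 * B * t := mul_nonneg (mul_nonneg (by norm_num) hBpos.le) htnn
        calc |ρs j * ρs i0 - ρ j * ρ i0| * |lam n ρ j| * |lam n ρ i0|
            ≤ (2 * ε) * (2 * B * t) * 1 :=
              mul_le_mul (mul_le_mul h1 h2 (abs_nonneg _) (by linarith)) h3 (abs_nonneg _)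
                (mul_nonneg (by linarith) hbt)
          _ ≤ 4 * B ^ 2 * (ε * t) := by
            have key : 0 ≤ 4 * B * (B - 1) * (ε * t) :=
              mul_nonneg (mul_nonneg (by linarith) (by linarith)) (mul_nonneg hεnn htnn)
            linarith [key]
      · have h1 := hfone j k
        have h2 : |lam n ρ j| ≤ 2 * B * t := by rw [abs_of_nonneg (hlamnn j)]; exact hlamj j hj
        have h3 : |lam n ρ k| ≤ 2 * B * ε := by
          rw [abs_of_nonneg (hlamnn k)]
          refine le_trans (hlamj k hk) ?_
          have := mul_le_mul_of_nonneg_left htε.le (show (0:ℝ) ≤ 2 * B by linarith)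
          linarith
        have hbt : (0:ℝ) ≤ 2 * B * t := mul_nonneg (mul_nonneg (by norm_num) hBpos.le) htnn
        calc |ρs j * ρs k - ρ j * ρ k| * |lam n ρ j| * |lam n ρ k|
            ≤ 1 * (2 * B * t) * (2 * B * ε) :=
              mul_le_mul (mul_le_mul h1 h2 (abs_nonneg _) zero_le_one) h3 (abs_nonneg _)
                (mul_nonneg zero_le_one hbt)
          _ = 4 * B ^ 2 * (ε * t) := by ring
  have hEbound : |E| ≤ CE * ε * t := by
    rw [hE]
    calc |∑ j, ∑ l ∈ Finset.univ.erase j, (ρs j * ρs l - ρ j * ρ l) * lam n ρ j * lam n ρ l|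
        ≤ ∑ j, |∑ l ∈ Finset.univ.erase j, (ρs j * ρs l - ρ j * ρ l) * lam n ρ j * lam n ρ l| :=
          Finset.abs_sum_le_sum_abs _ _
      _ ≤ ∑ j : Fin n, ∑ l ∈ Finset.univ.erase j,
            |(ρs j * ρs l - ρ j * ρ l) * lam n ρ j * lam n ρ l| :=
          Finset.sum_le_sum fun j _ => Finset.abs_sum_le_sum_abs _ _
      _ ≤ ∑ _j : Fin n, ∑ _l ∈ Finset.univ.erase _j, 4 * B ^ 2 * (ε * t) :=
          Finset.sum_le_sum fun j _ => Finset.sum_le_sum fun l hl =>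
            hterm j l (Finset.mem_erase.mp hl).1
      _ = ∑ j : Fin n, ((Finset.univ.erase j).card : ℝ) * (4 * B ^ 2 * (ε * t)) := by
          simp [Finset.sum_const, nsmul_eq_mul]
      _ ≤ ∑ _j : Fin n, (n : ℝ) * (4 * B ^ 2 * (ε * t)) :=
          Finset.sum_le_sum fun j _ => mul_le_mul_of_nonneg_right (hcard _)
            (mul_nonneg (by positivity) (mul_nonneg hεnn htnn))
      _ = (n : ℝ) * ((n : ℝ) * (4 * B ^ 2 * (ε * t))) := by
          simp [Finset.sum_const, Finset.card_univ, nsmul_eq_mul]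
      _ = CE * ε * t := by rw [hCE]; ring
  have hA0b : |A0 - ρ i0| ≤ 4 * (n : ℝ) * B * ε * t := by
    rw [hA0, add_sub_cancel_left]
    calc |∑ j ∈ Finset.univ.erase i0, (ρs i0 * ρs j - ρ i0 * ρ j) * lam n ρ j|
        ≤ ∑ j ∈ Finset.univ.erase i0, |(ρs i0 * ρs j - ρ i0 * ρ j) * lam n ρ j| :=
          Finset.abs_sum_le_sum_abs _ _
      _ ≤ ∑ _j ∈ Finset.univ.erase i0, 2 * ε * (2 * B * t) := by
          apply Finset.sum_le_sum
          intro j hj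
          have hj0 := (Finset.mem_erase.mp hj).1
          rw [abs_mul]
          apply mul_le_mul (hfsmall j hj0) _ (abs_nonneg _) (by linarith)
          rw [abs_of_nonneg (hlamnn j)]; exact hlamj j hj0
      _ = ((Finset.univ.erase i0).card : ℝ) * (2 * ε * (2 * B * t)) := by
          simp [Finset.sum_const, nsmul_eq_mul]
      _ ≤ (n : ℝ) * (2 * ε * (2 * B * t)) :=
          mul_le_mul_of_nonneg_right (hcard _)
            (mul_nonneg (mul_nonneg (by norm_num) hεnn)
              (mul_nonneg (mul_nonneg (by norm_num) hBpos.le) htnn))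
      _ = 4 * (n : ℝ) * B * ε * t := by ring
  -- Ai analysis
  have hi0mem : i0 ∈ Finset.univ.erase i := Finset.mem_erase.mpr ⟨Ne.symm hii0, Finset.mem_univ _⟩
  obtain ⟨R, hR⟩ : ∃ x : ℝ, x = ∑ j ∈ (Finset.univ.erase i).erase i0,
      (ρs i * ρs j - ρ i * ρ j) * lam n ρ j := ⟨_, rfl⟩
  have hsplitAi : Ai = ρ i + ((ρs i * ρs i0 - ρ i * ρ i0) * lam n ρ i0 + R) := by
    rw [hAi, hR, ← Finset.add_sum_erase _ _ hi0mem]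
  have hRb : |R| ≤ 2 * (n : ℝ) * B * t := by
    rw [hR]
    calc |∑ j ∈ (Finset.univ.erase i).erase i0, (ρs i * ρs j - ρ i * ρ j) * lam n ρ j|
        ≤ ∑ j ∈ (Finset.univ.erase i).erase i0, |(ρs i * ρs j - ρ i * ρ j) * lam n ρ j| :=
          Finset.abs_sum_le_sum_abs _ _
      _ ≤ ∑ _j ∈ (Finset.univ.erase i).erase i0, 1 * (2 * B * t) := by
          apply Finset.sum_le_sum
          intro j hj
          have hj0 := (Finset.mem_erase.mp hj).1
          rw [abs_mul]
          apply mul_le_mul (hfone i j) _ (abs_nonneg _) zero_le_one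
          rw [abs_of_nonneg (hlamnn j)]; exact hlamj j hj0
      _ = (((Finset.univ.erase i).erase i0).card : ℝ) * (1 * (2 * B * t)) := by
          simp [Finset.sum_const, nsmul_eq_mul]
      _ ≤ (n : ℝ) * (1 * (2 * B * t)) :=
          mul_le_mul_of_nonneg_right (hcard _)
            (mul_nonneg zero_le_one (mul_nonneg (mul_nonneg (by norm_num) hBpos.le) htnn))
      _ = 2 * (n : ℝ) * B * t := by ring
  have hiden : Ai - ρs i * ρs i0 =
      ρ i * (1 - ρ i0 * lam n ρ i0) - ρs i * ρs i0 * (1 - lam n ρ i0) + R := by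
    rw [hsplitAi]; ring
  have hlam0nn := hlamnn i0
  have h1L0nn : 0 ≤ 1 - lam n ρ i0 := by linarith [hlam0le]
  have hr0l : 0 ≤ 1 - ρ i0 * lam n ρ i0 := by
    have := mul_le_mul hρ01 hlam0le (hlamnn i0) zero_le_one
    linarith
  have hr0l' : 1 - ρ i0 * lam n ρ i0 ≤ 3 * (1 + (n : ℝ) * B) * t := by
    have hnb : 0 ≤ (n : ℝ) * B := by positivity
    have hL0t := mul_le_mul_of_nonneg_right hlam0le (show (0:ℝ) ≤ 1 - ρ i0 by linarith)
    have hnbt := mul_nonneg hnb htnn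
    linarith [h1mlam0]
  have hcnn : 0 ≤ ρs i * ρs i0 := mul_nonneg (hρs i).1.le (hρs i0).1.le
  have hcle1 : ρs i * ρs i0 ≤ 1 := by
    have := mul_le_mul (hρs i).2.le (hρs i0).2.le (hρs i0).1.le zero_le_one
    linarith
  have hAib : |Ai - ρs i * ρs i0| ≤ Ca * t := by
    rw [hiden]
    have b1 : |ρ i * (1 - ρ i0 * lam n ρ i0)| ≤ 1 * (3 * (1 + (n : ℝ) * B) * t) := by
      rw [abs_of_nonneg (mul_nonneg (hρ i).1 hr0l)]
      exact mul_le_mul (hρ i).2.le hr0l' hr0l zero_le_one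
    have b2 : |ρs i * ρs i0 * (1 - lam n ρ i0)| ≤ 1 * (2 * (1 + (n : ℝ) * B) * t) := by
      rw [abs_of_nonneg (mul_nonneg hcnn h1L0nn)]
      exact mul_le_mul hcle1 h1mlam0 h1L0nn zero_le_one
    have tri : |ρ i * (1 - ρ i0 * lam n ρ i0) - ρs i * ρs i0 * (1 - lam n ρ i0) + R|
        ≤ |ρ i * (1 - ρ i0 * lam n ρ i0)| + |ρs i * ρs i0 * (1 - lam n ρ i0)| + |R| := by
      calc |ρ i * (1 - ρ i0 * lam n ρ i0) - ρs i * ρs i0 * (1 - lam n ρ i0) + R|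
          ≤ |ρ i * (1 - ρ i0 * lam n ρ i0) - ρs i * ρs i0 * (1 - lam n ρ i0)| + |R| :=
            abs_add_le _ _
        _ ≤ |ρ i * (1 - ρ i0 * lam n ρ i0)| + |ρs i * ρs i0 * (1 - lam n ρ i0)| + |R| := by
            have := abs_sub (ρ i * (1 - ρ i0 * lam n ρ i0)) (ρs i * ρs i0 * (1 - lam n ρ i0))
            linarith
    have hnb : 0 ≤ (n : ℝ) * B := by positivity
    rw [hCa]
    have hnbt := mul_nonneg hnb htnn
    linarith [tri, b1, b2, hRb, htnn]
  -- D bounds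
  have hCEε : CE * ε ≤ 1 / 2 := by
    linarith [hεX, mul_nonneg hεnn (show (0:ℝ) ≤ 4 * (n : ℝ) * B + 1 by positivity)]
  have ht1 : t ≤ 1 := le_trans htε.le hε1
  have hEhalf : |E| ≤ 1 / 2 := by
    linarith [hEbound, mul_le_mul_of_nonneg_right hCEε htnn, ht1, htnn]
  have habsE := abs_nonneg E
  have hleE := le_abs_self E
  have hgeE := neg_abs_le E
  have hDge : 1 - |E| ≤ D := by
    rw [hD]
    have h1 : (1 - |E|) ^ 2 ≤ 1 + E := by
      have := mul_le_mul_of_nonneg_left hEhalf habsE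
      linarith [hgeE, habsE]
    calc 1 - |E| = Real.sqrt ((1 - |E|) ^ 2) := (Real.sqrt_sq (by linarith)).symm
      _ ≤ Real.sqrt (1 + E) := Real.sqrt_le_sqrt h1
  have hDle : D ≤ 1 + |E| := by
    rw [hD]
    calc Real.sqrt (1 + E) ≤ Real.sqrt ((1 + |E|) ^ 2) :=
          Real.sqrt_le_sqrt (by linarith [hleE, habsE, sq_nonneg |E|])
      _ = 1 + |E| := Real.sqrt_sq (by linarith)
  have hDpos : 0 < D := by linarith
  have hDm1 : |D - 1| ≤ |E| := abs_le.mpr ⟨by linarith, by linarith⟩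
  -- gap bound
  have hgap : t / 2 ≤ D - A0 := by
    have h1 := (abs_le.mp hA0b).1
    have h2 := (abs_le.mp hA0b).2
    have h4 : (CE + 4 * (n : ℝ) * B) * ε ≤ 1 / 2 := by linarith [hεX, hεnn]
    have h5 := mul_le_mul_of_nonneg_right h4 htnn
    have h6 : CE * ε * t + 4 * (n : ℝ) * B * ε * t = (CE + 4 * (n : ℝ) * B) * ε * t := by ring
    have h7 : 1 - CE * ε * t ≤ D := by linarith [hDge, hEbound]
    have h8 : ρ i0 = 1 - t := by rw [ht]; ring
    linarith [h2, h7, h5, h6]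
  -- numerator bound
  have hnum : |Ai - ρs i * ρs i0 * D| ≤ CL * t := by
    have hid : Ai - ρs i * ρs i0 * D
        = (Ai - ρs i * ρs i0) - ρs i * ρs i0 * (D - 1) := by ring
    rw [hid]
    have b3 : |ρs i * ρs i0 * (D - 1)| ≤ CE * ε * t := by
      rw [abs_mul]
      calc |ρs i * ρs i0| * |D - 1| ≤ 1 * (CE * ε * t) := by
            apply mul_le_mul _ (le_trans hDm1 hEbound) (abs_nonneg _) zero_le_one
            rw [abs_of_nonneg hcnn]; exact hcle1
        _ = CE * ε * t := one_mul _
    have tri := abs_sub (Ai - ρs i * ρs i0) (ρs i * ρs i0 * (D - 1))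
    have hCEt : CE * ε * t ≤ CE * t := by
      have := mul_le_mul_of_nonneg_right
        (mul_le_mul_of_nonneg_left hε1 hCEpos.le) htnn
      linarith
    rw [hCL]
    linarith [hAib, b3, tri, hCEt]
  -- final assembly
  rw [hemFi, hemF0]
  have hDne := hDpos.ne'
  have e1 : Ai / D - ρs i * ρs i0 = (Ai - ρs i * ρs i0 * D) / D := by
    field_simp
  have e2 : 1 - A0 / D = (D - A0) / D := by field_simp
  rw [e1, e2, abs_div, abs_of_pos hDpos]
  rw [show 2 * CL * ((D - A0) / D) = (2 * CL * (D - A0)) / D by ring]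
  apply div_le_div_of_nonneg_right ?_ hDpos.le
  have := mul_le_mul_of_nonneg_left hgap (show (0:ℝ) ≤ 2 * CL by linarith)
  linarith [hnum]
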